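/- Let D be a plane domain, a ∈ ∂D, and θ a conformal map from D into 𝔻 extending to a C¹-diffeomorphism of a neighborhood of a with θ(a) = 1 and θ'(a) ≠ 0. Then lim_{z→a, z∈D} δ_{θ(D)}(θ(z))/δ_D(z) = |θ'(a)|. -/

import Mathlib

open Metric Set Filter Topology

private lemma le_infDist_aux {x : ℂ} {s : Set ℂ} {C : ℝ} (hs : s.Nonempty)
    (h : ∀ y ∈ s, C ≤ dist x y) : C ≤ Metric.infDist x s := by
  by_contra hlt
  push_neg at hlt
  obtain ⟨y, hy, hd⟩ := (Metric.infDist_lt_iff hs).1 hlt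
  exact absurd hd (not_lt.2 (h y hy))

theorem boundary_distance_ratio_limit (D : Set ℂ) (hD : IsOpen D) (hDc : IsConnected D)
    (a : ℂ) (ha : a ∈ frontier D)
    (U : Set ℂ) (hU : IsOpen U) (haU : a ∈ U)
    (θ : ℂ → ℂ) (hθ : DifferentiableOn ℂ θ D) (hinjD : Set.InjOn θ D)
    (him : θ '' D ⊆ Metric.ball 0 1)
    (hC1 : ContDiffOn ℝ 1 θ U) (hinjU : Set.InjOn θ U)
    (hθa : θ a = 1) (c : ℂ) (hderiv : HasDerivAt θ c a) (hc : c ≠ 0) :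
    Filter.Tendsto
      (fun z => Metric.infDist (θ z) (θ '' D)ᶜ / Metric.infDist z Dᶜ)
      (nhdsWithin a D) (nhds (‖c‖)) := by
  have habs : 0 < ‖c‖ := norm_pos_iff.mpr hc
  have haD : a ∉ D := by
    intro h
    rw [frontier, hD.interior_eq] at ha
    exact ha.2 h
  have hDcne : Dᶜ.Nonempty := ⟨a, haD⟩
  have h1D : (1 : ℂ) ∉ θ '' D := by
    intro h
    have := him h
    simp [Metric.mem_ball] at this
  -- open mapping theorem
  have hopen : ∀ s ⊆ D, IsOpen s → IsOpen (θ '' s) := by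
    have han : AnalyticOnNhd ℂ θ D := hθ.analyticOnNhd hD
    rcases han.is_constant_or_isOpen hDc.isPreconnected with ⟨w, hw⟩ | h
    · exfalso
      obtain ⟨z₀, hz₀⟩ := hDc.nonempty
      obtain ⟨r, hr, hball⟩ := Metric.isOpen_iff.1 hD z₀ hz₀
      have hz₁ : z₀ + (r / 2 : ℝ) ∈ D := by
        apply hball
        simp only [Metric.mem_ball, dist_self_add_left, Complex.norm_real, Real.norm_eq_abs]
        rw [abs_of_pos (by linarith)]
        linarith
      have heq : z₀ + (r / 2 : ℝ) = z₀ :=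
        hinjD hz₁ hz₀ (by rw [hw _ hz₁, hw _ hz₀])
      have : ((r / 2 : ℝ) : ℂ) = 0 := by linear_combination heq
      rw [Complex.ofReal_eq_zero] at this
      linarith
    · exact h
  have hcont : ContinuousOn θ U := hC1.continuousOn
  have hconta : ContinuousAt θ a := hcont.continuousAt (hU.mem_nhds haU)
  -- the real derivative as a continuous linear map
  set L : ℂ →L[ℝ] ℂ :=
    ((1 : ℂ →L[ℂ] ℂ).smulRight c).restrictScalars ℝ with hLdef
  have hLapp : ∀ v : ℂ, L v = v * c := by
    intro v
    simp [hLdef, smul_eq_mul]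
  have hLnorm : ∀ v : ℂ, ‖L v‖ = ‖c‖ * ‖v‖ := by
    intro v
    rw [hLapp, norm_mul, mul_comm]
  have hfa : fderiv ℝ θ a = L := (hderiv.hasFDerivAt.restrictScalars ℝ).fderiv
  have hfd : ContinuousOn (fderiv ℝ θ) U :=
    hC1.continuousOn_fderiv_of_isOpen hU le_rfl
  have hdiffU : ∀ x ∈ U, DifferentiableAt ℝ θ x := fun x hx =>
    (hC1.differentiableOn one_ne_zero).differentiableAt (hU.mem_nhds hx)
  -- KEY estimate
  have key : ∀ ε : ℝ, 0 < ε → ε < ‖c‖ →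
      ∀ᶠ z in 𝓝[D] a,
        (‖c‖ - ε) * Metric.infDist z Dᶜ ≤ Metric.infDist (θ z) (θ '' D)ᶜ ∧
        Metric.infDist (θ z) (θ '' D)ᶜ ≤ (‖c‖ + ε) * Metric.infDist z Dᶜ := by
    intro ε hε hεc
    -- choose ρ
    have hfdc : Filter.Tendsto (fderiv ℝ θ) (𝓝 a) (𝓝 L) := by
      rw [← hfa]
      exact (hfd.continuousAt (hU.mem_nhds haU)).tendsto
    have hev : ∀ᶠ x in 𝓝 a, ‖fderiv ℝ θ x - L‖ ≤ ε ∧ x ∈ U := by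
      filter_upwards [hfdc (Metric.closedBall_mem_nhds L hε), hU.mem_nhds haU] with x hx hxU
      exact ⟨by rw [← dist_eq_norm]; exact Metric.mem_closedBall.1 hx, hxU⟩
    obtain ⟨ρ, hρ, hρsub⟩ := Metric.nhds_basis_closedBall.mem_iff.1 hev
    have hρU : Metric.closedBall a ρ ⊆ U := fun x hx => (hρsub hx).2
    have hρbd : ∀ x ∈ Metric.closedBall a ρ, ‖fderiv ℝ θ x - L‖ ≤ ε := fun x hx => (hρsub hx).1
    -- two-sided Lipschitz estimates on the closed ball
    have hest : ∀ x ∈ Metric.closedBall a ρ, ∀ y ∈ Metric.closedBall a ρ,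
        ‖θ y - θ x - L (y - x)‖ ≤ ε * ‖y - x‖ := fun x hx y hy =>
      (convex_closedBall a ρ).norm_image_sub_le_of_norm_fderiv_le'
        (fun v hv => hdiffU v (hρU hv)) hρbd hx hy
    have hupper : ∀ x ∈ Metric.closedBall a ρ, ∀ y ∈ Metric.closedBall a ρ,
        dist (θ y) (θ x) ≤ (‖c‖ + ε) * dist y x := by
      intro x hx y hy
      have h1 := hest x hx y hy
      have h2 : ‖θ y - θ x‖ ≤ ‖L (y - x)‖ + ε * ‖y - x‖ := by
        calc ‖θ y - θ x‖ ≤ ‖θ y - θ x - L (y - x)‖ + ‖L (y - x)‖ := by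
              simpa using norm_add_le (θ y - θ x - L (y - x)) (L (y - x))
          _ ≤ ε * ‖y - x‖ + ‖L (y - x)‖ := by linarith
          _ = ‖L (y - x)‖ + ε * ‖y - x‖ := by ring
      rw [dist_eq_norm, dist_eq_norm]
      rw [hLnorm] at h2
      linarith [h2]
    have hlower : ∀ x ∈ Metric.closedBall a ρ, ∀ y ∈ Metric.closedBall a ρ,
        (‖c‖ - ε) * dist y x ≤ dist (θ y) (θ x) := by
      intro x hx y hy
      have h1 := hest x hx y hy
      have h2 : ‖L (y - x)‖ ≤ ‖θ y - θ x - L (y - x)‖ + ‖θ y - θ x‖ := by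
        calc ‖L (y - x)‖ = ‖(θ y - θ x) - (θ y - θ x - L (y - x))‖ := by ring_nf
          _ ≤ ‖θ y - θ x‖ + ‖θ y - θ x - L (y - x)‖ := norm_sub_le _ _
          _ = ‖θ y - θ x - L (y - x)‖ + ‖θ y - θ x‖ := by ring
      rw [hLnorm] at h2
      rw [dist_eq_norm, dist_eq_norm]
      nlinarith [h1, h2]
    -- the sphere constant m
    have hsphU : Metric.sphere a ρ ⊆ U := Metric.sphere_subset_closedBall.trans hρU
    have hKc : IsCompact (θ '' Metric.sphere a ρ) :=
      (isCompact_sphere a ρ).image_of_continuousOn (hcont.mono hsphU)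
    have hKne : (θ '' Metric.sphere a ρ).Nonempty :=
      ((NormedSpace.sphere_nonempty).2 hρ.le).image θ
    have h1K : (1 : ℂ) ∉ θ '' Metric.sphere a ρ := by
      rintro ⟨w, hw, hw1⟩
      have : w = a := hinjU (hsphU hw) haU (by rw [hw1, hθa])
      rw [this] at hw
      simp only [Metric.mem_sphere, dist_self] at hw
      exact hρ.ne hw
    set m : ℝ := Metric.infDist 1 (θ '' Metric.sphere a ρ) with hmdef
    have hm : 0 < m := (hKc.isClosed.notMem_iff_infDist_pos hKne).1 h1K
    -- the local domain
    set Ω : Set ℂ := Metric.ball a ρ ∩ D with hΩdef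
    have hΩD : Ω ⊆ D := inter_subset_right
    have hΩopen : IsOpen Ω := isOpen_ball.inter hD
    have hΩU : Ω ⊆ U := (inter_subset_left.trans Metric.ball_subset_closedBall).trans hρU
    have hθΩopen : IsOpen (θ '' Ω) := hopen Ω hΩD hΩopen
    have hθΩball : θ '' Ω ⊆ Metric.ball 0 1 := (image_mono (f := θ) hΩD).trans him
    have h1Ω : (1 : ℂ) ∉ θ '' Ω := fun h => by
      have := hθΩball h
      simp [Metric.mem_ball] at this
    have hΩcne : Ωᶜ.Nonempty := ⟨a, fun h => haD h.2⟩
    -- closure of Ω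
    have hKsub : closure Ω ⊆ Metric.closedBall a ρ :=
      closure_minimal (inter_subset_left.trans Metric.ball_subset_closedBall)
        Metric.isClosed_closedBall
    have hKcomp : IsCompact (closure Ω) :=
      (isCompact_closedBall a ρ).of_isClosed_subset isClosed_closure hKsub
    have hKimg : IsCompact (θ '' closure Ω) :=
      hKcomp.image_of_continuousOn (hcont.mono (hKsub.trans hρU))
    have hclsub : closure (θ '' Ω) ⊆ θ '' closure Ω :=
      closure_minimal (image_mono (f := θ) subset_closure) hKimg.isClosed
    -- eventual conditions
    have hev1 : ∀ᶠ z in 𝓝[D] a, z ∈ D := eventually_mem_nhdsWithin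
    have hev2 : ∀ᶠ z in 𝓝[D] a, dist z a < ρ / 2 := by
      apply Filter.Eventually.filter_mono nhdsWithin_le_nhds
      filter_upwards [Metric.ball_mem_nhds a (by linarith : (0:ℝ) < ρ / 2)] with z hz
      exact Metric.mem_ball.1 hz
    have hev3 : ∀ᶠ z in 𝓝[D] a, dist (θ z) 1 < m / 2 := by
      apply Filter.Eventually.filter_mono nhdsWithin_le_nhds
      have hθt : Filter.Tendsto θ (𝓝 a) (𝓝 1) := hθa ▸ hconta.tendsto
      filter_upwards [hθt (Metric.ball_mem_nhds 1 (by linarith : (0:ℝ) < m / 2))] with z hz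
      exact Metric.mem_ball.1 hz
    filter_upwards [hev1, hev2, hev3] with z hzD hza hθz
    -- basic facts about z
    have hdza : Metric.infDist z Dᶜ ≤ dist z a := Metric.infDist_le_dist_of_mem haD
    have hzball : z ∈ Metric.ball a ρ := Metric.mem_ball.2 (by linarith)
    have hzΩ : z ∈ Ω := ⟨hzball, hzD⟩
    have hzcb : z ∈ Metric.closedBall a ρ := Metric.ball_subset_closedBall hzball
    -- (I) : infDist z Ωᶜ = infDist z Dᶜ
    have hIeq : Metric.infDist z Ωᶜ = Metric.infDist z Dᶜ := by
      apply le_antisymm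
      · exact Metric.infDist_le_infDist_of_subset (compl_subset_compl.2 hΩD) hDcne
      · apply le_infDist_aux hΩcne
        intro w hw
        rw [hΩdef, compl_inter] at hw
        rcases hw with hw | hw
        · have h1 : ρ ≤ dist w a := by
            simp only [mem_compl_iff, Metric.mem_ball, not_lt] at hw
            exact hw
          have h2 : dist w a ≤ dist w z + dist z a := dist_triangle w z a
          rw [dist_comm z w]
          linarith
        · exact Metric.infDist_le_dist_of_mem hw
    -- nearest point on the image side
    have hθΩne_univ : θ '' Ω ≠ univ := by
      intro h
      have : (2 : ℂ) ∈ θ '' Ω := h ▸ mem_univ _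
      have := hθΩball this
      simp only [Metric.mem_ball, Complex.dist_eq, sub_zero] at this
      norm_num at this
    obtain ⟨q, hqf, hqd⟩ :=
      exists_mem_frontier_infDist_compl_eq_dist (mem_image_of_mem θ hzΩ) hθΩne_univ
    have hqcl : q ∈ closure (θ '' Ω) := frontier_subset_closure hqf
    have hqnot : q ∉ θ '' Ω := by
      rw [hθΩopen.frontier_eq] at hqf
      exact hqf.2
    have hq1 : dist (θ z) q ≤ dist (θ z) 1 := by
      rw [← hqd]
      exact Metric.infDist_le_dist_of_mem h1Ω
    have hqm : dist (θ z) q < m / 2 := lt_of_le_of_lt hq1 hθz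
    obtain ⟨w, hwK, hwq⟩ := hclsub hqcl
    have hwcb : w ∈ Metric.closedBall a ρ := hKsub hwK
    have hwU : w ∈ U := hρU hwcb
    have hwnot : w ∉ Ω := fun h => hqnot ⟨w, h, hwq⟩
    -- (III) : q ∉ θ '' D
    have hqD : q ∉ θ '' D := by
      rintro ⟨u, huD, huq⟩
      by_cases huU : u ∈ U
      · have huw : u = w := hinjU huU hwU (huq.trans hwq.symm)
        subst huw
        have husph : u ∈ Metric.sphere a ρ := by
          have h1 : dist u a ≤ ρ := Metric.mem_closedBall.1 hwcb
          have h2 : ¬ dist u a < ρ := fun h => hwnot ⟨Metric.mem_ball.2 h, huD⟩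
          simp only [Metric.mem_sphere]
          linarith [not_lt.1 h2]
        have h3 : m ≤ dist 1 q := by
          rw [← huq]
          exact Metric.infDist_le_dist_of_mem (mem_image_of_mem θ husph)
        have h4 : dist 1 q ≤ dist 1 (θ z) + dist (θ z) q := dist_triangle _ _ _
        rw [dist_comm (1:ℂ) (θ z)] at h4
        linarith
      · have hucb : u ∉ Metric.closedBall a ρ := fun h => huU (hρU h)
        have hud : ρ < dist u a := by
          by_contra h
          exact hucb (Metric.mem_closedBall.2 (not_lt.1 h))
        obtain ⟨s, hs, hsD⟩ := Metric.isOpen_iff.1 hD u huD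
        set t : ℝ := min s (dist u a - ρ) with htdef
        have ht : 0 < t := lt_min hs (by linarith)
        have hND : Metric.ball u t ⊆ D :=
          (Metric.ball_subset_ball (min_le_left _ _)).trans hsD
        have hNB : ∀ v ∈ Metric.ball u t, v ∉ Metric.ball a ρ := by
          intro v hv hvB
          have h1 : dist u v < t := by rw [dist_comm]; exact Metric.mem_ball.1 hv
          have h2 : dist v a < ρ := Metric.mem_ball.1 hvB
          have h3 : dist u a ≤ dist u v + dist v a := dist_triangle _ _ _
          have h4 : t ≤ dist u a - ρ := min_le_right _ _
          linarith
        have hθN : IsOpen (θ '' Metric.ball u t) := hopen _ hND isOpen_ball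
        have hqN : q ∈ θ '' Metric.ball u t :=
          ⟨u, Metric.mem_ball_self ht, huq⟩
        obtain ⟨x, hxN, hxΩ⟩ := _root_.mem_closure_iff.1 hqcl _ hθN hqN
        obtain ⟨n, hn, hnx⟩ := hxN
        obtain ⟨v, hv, hvx⟩ := hxΩ
        have hnv : n = v := hinjD (hND hn) (hΩD hv) (by rw [hnx, hvx])
        exact hNB v (hnv ▸ hn) hv.1
    -- (IV) : infDist to the full image complement
    have hθDcne : (θ '' D)ᶜ.Nonempty := ⟨1, h1D⟩
    have hIVeq : Metric.infDist (θ z) (θ '' D)ᶜ = dist (θ z) q := by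
      apply le_antisymm
      · exact Metric.infDist_le_dist_of_mem hqD
      · rw [← hqd]
        exact Metric.infDist_le_infDist_of_subset
          (compl_subset_compl.2 (image_mono (f := θ) hΩD)) hθDcne
    constructor
    · -- lower bound
      have h1 : (‖c‖ - ε) * dist z w ≤ dist (θ z) (θ w) :=
        hlower w hwcb z hzcb
      have h2 : Metric.infDist z Ωᶜ ≤ dist z w := Metric.infDist_le_dist_of_mem hwnot
      calc (‖c‖ - ε) * Metric.infDist z Dᶜ
          = (‖c‖ - ε) * Metric.infDist z Ωᶜ := by rw [hIeq]
        _ ≤ (‖c‖ - ε) * dist z w :=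
            mul_le_mul_of_nonneg_left h2 (by linarith)
        _ ≤ dist (θ z) (θ w) := h1
        _ = Metric.infDist (θ z) (θ '' D)ᶜ := by rw [hIVeq, hwq]
    · -- upper bound
      have hΩne_univ : Ω ≠ univ := fun h => haD (hΩD (h ▸ mem_univ a))
      obtain ⟨w0, hw0f, hw0d⟩ := exists_mem_frontier_infDist_compl_eq_dist hzΩ hΩne_univ
      have hw0not : w0 ∉ Ω := by
        rw [hΩopen.frontier_eq] at hw0f
        exact hw0f.2
      have hw0cb : w0 ∈ Metric.closedBall a ρ := hKsub (frontier_subset_closure hw0f)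
      have hθw0 : θ w0 ∈ (θ '' Ω)ᶜ := by
        rintro ⟨v, hv, hveq⟩
        exact hw0not ((hinjU (hρU hw0cb) (hΩU hv) hveq.symm) ▸ hv)
      have h1 : Metric.infDist (θ z) (θ '' Ω)ᶜ ≤ dist (θ z) (θ w0) :=
        Metric.infDist_le_dist_of_mem hθw0
      have h2 : dist (θ z) (θ w0) ≤ (‖c‖ + ε) * dist z w0 :=
        hupper w0 hw0cb z hzcb
      calc Metric.infDist (θ z) (θ '' D)ᶜ
          = dist (θ z) q := hIVeq
        _ = Metric.infDist (θ z) (θ '' Ω)ᶜ := hqd.symm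
        _ ≤ dist (θ z) (θ w0) := h1
        _ ≤ (‖c‖ + ε) * dist z w0 := h2
        _ = (‖c‖ + ε) * Metric.infDist z Ωᶜ := by rw [hw0d]
        _ = (‖c‖ + ε) * Metric.infDist z Dᶜ := by rw [hIeq]
  -- conclude
  rw [Metric.tendsto_nhds]
  intro ε hε
  set ε' : ℝ := min (ε / 2) (‖c‖ / 2) with hε'def
  have hε'pos : 0 < ε' := lt_min (by linarith) (by linarith)
  have hε'c : ε' < ‖c‖ :=
    lt_of_le_of_lt (min_le_right _ _) (by linarith)
  have hε'ε : ε' < ε := lt_of_le_of_lt (min_le_left _ _) (by linarith)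
  filter_upwards [key ε' hε'pos hε'c, eventually_mem_nhdsWithin] with z hz hzD
  obtain ⟨hlow, hup⟩ := hz
  have hdz : 0 < Metric.infDist z Dᶜ := by
    refine (hD.isClosed_compl.notMem_iff_infDist_pos hDcne).1 ?_
    simpa using hzD
  have hdiv1 : ‖c‖ - ε' ≤ Metric.infDist (θ z) (θ '' D)ᶜ / Metric.infDist z Dᶜ :=
    (le_div_iff₀ hdz).2 hlow
  have hdiv2 : Metric.infDist (θ z) (θ '' D)ᶜ / Metric.infDist z Dᶜ ≤ ‖c‖ + ε' :=
    (div_le_iff₀ hdz).2 (by linarith [hup])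
  rw [Real.dist_eq, abs_sub_lt_iff]
  constructor <;> linarith
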